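/- Let p ∈ (0,2], ε ∈ (0,1] and k an integer with 1 ≤ k ≤ n/2, and suppose the level set S_j contributes (for the trimmed-k problem). Write v = ζ(1+ε)^{t−j}. Then for every integer w ≥ 0, the number of indices i with k < i ≤ n−k and v/2^{w+1} ≤ |a_i| < v/2^w is at most 4 · (log m/ε²) · s_j · 2^{wp}. -/

import Mathlib

open Finset

noncomputable section

/-- `t = 1 + log_{1+ε} m`, all logarithms natural. -/
def tExp (ε m : ℝ) : ℝ := 1 + Real.log m / Real.log (1 + ε)

/-- The level set `S_j = {i : ζ(1+ε)^{t-j-1} ≤ |x_i| < ζ(1+ε)^{t-j}}`. -/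
def levelSet {n : ℕ} (x : Fin n → ℤ) (ε m ζ : ℝ) (j : ℕ) : Finset (Fin n) :=
  Finset.univ.filter fun i =>
    ζ * (1 + ε) ^ (tExp ε m - (j : ℝ) - 1) ≤ |(x i : ℝ)| ∧
      |(x i : ℝ)| < ζ * (1 + ε) ^ (tExp ε m - (j : ℝ))

/-- `rank(v)`: the number of indices with `|x_i| > v`. -/
def rankOf {n : ℕ} (x : Fin n → ℤ) (v : ℝ) : ℕ :=
  (Finset.univ.filter fun i : Fin n => v < |(x i : ℝ)|).card

/-- `Σ_{i=1}^k |a_i|^p` (paper is 1-indexed; here `a` is 0-indexed). -/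
def topSum {n : ℕ} (a : Fin n → ℤ) (p : ℝ) (k : ℕ) : ℝ :=
  ∑ i ∈ Finset.univ.filter (fun i : Fin n => (i : ℕ) < k), |(a i : ℝ)| ^ p

/-- `Σ_{i=k+1}^n |a_i|^p = ‖x_{-k}‖_p^p` (paper is 1-indexed). -/
def tailSum {n : ℕ} (a : Fin n → ℤ) (p : ℝ) (k : ℕ) : ℝ :=
  ∑ i ∈ Finset.univ.filter (fun i : Fin n => k ≤ (i : ℕ)), |(a i : ℝ)| ^ p

/-- `Σ_{i=k+1}^{n-k} |a_i|^p` (paper is 1-indexed). -/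
def midSum {n : ℕ} (a : Fin n → ℤ) (p : ℝ) (k : ℕ) : ℝ :=
  ∑ i ∈ Finset.univ.filter (fun i : Fin n => k ≤ (i : ℕ) ∧ (i : ℕ) < n - k), |(a i : ℝ)| ^ p

/-- `|a_k|` for paper (1-indexed) index `k`, i.e. 0-indexed entry `k-1`. -/
def aAbs {n : ℕ} (a : Fin n → ℤ) (k : ℕ) : ℝ :=
  if h : k - 1 < n then |(a ⟨k - 1, h⟩ : ℝ)| else 0

/-- `a` is `x` rearranged in non-increasing order of absolute value. -/
def IsRearrangement {n : ℕ} (x a : Fin n → ℤ) : Prop :=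
  (∃ σ : Equiv.Perm (Fin n), ∀ i, a i = x (σ i)) ∧
    ∀ i i' : Fin n, i ≤ i' → |a i'| ≤ |a i|

/-- The level set `S_j` contributes (for the top-`k` problem with exponent `p`). -/
def ContributesTop {n : ℕ} (x a : Fin n → ℤ) (p ε m ζ : ℝ) (j k : ℕ) : Prop :=
  ε ^ 2 / Real.log m * topSum a p k ≤ ∑ i ∈ levelSet x ε m ζ j, |(x i : ℝ)| ^ p

/-- The level set `S_j` contributes (for the trimmed-`k` problem with exponent `p`). -/
def ContributesTrim {n : ℕ} (x a : Fin n → ℤ) (p ε m ζ : ℝ) (j k : ℕ) : Prop :=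
  ε ^ 2 / Real.log m * (midSum a p k + k * aAbs a k ^ p) ≤
    ∑ i ∈ levelSet x ε m ζ j, |(x i : ℝ)| ^ p

/-- if `S_j` contributes for the trimmed-`k` problem, then for every `w ≥ 0` the
number of indices `i` with `k < i ≤ n−k` (paper 1-indexed) and `v/2^{w+1} ≤ |a_i| < v/2^w` is at
most `4 · (log m/ε²) · s_j · 2^{wp}`, where `v = ζ(1+ε)^{t-j}`. -/
theorem stmt_9 (n : ℕ) (hn : 2 ≤ n) (x a : Fin n → ℤ) (p ε m ζ : ℝ) (k j w : ℕ)
    (hp1 : 0 < p) (hp2 : p ≤ 2) (hε1 : 0 < ε) (hε2 : ε ≤ 1)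
    (hk1 : 1 ≤ k) (hk2 : 2 * k ≤ n)
    (hra : IsRearrangement x a)
    (hxm : ∀ i, |(x i : ℝ)| ≤ m) (hm1 : 2 ≤ m) (hm2 : m ≤ (n : ℝ))
    (hζ1 : 1 / 2 ≤ ζ) (hζ2 : ζ ≤ 1)
    (hcon : ContributesTrim x a p ε m ζ j k) :
    ∀ v : ℝ, v = ζ * (1 + ε) ^ (tExp ε m - (j : ℝ)) →
    ((Finset.univ.filter fun i : Fin n =>
        (k ≤ (i : ℕ) ∧ (i : ℕ) < n - k) ∧
          v / 2 ^ (w + 1) ≤ |(a i : ℝ)| ∧ |(a i : ℝ)| < v / 2 ^ w).card : ℝ) ≤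
      4 * (Real.log m / ε ^ 2) * ((levelSet x ε m ζ j).card : ℝ) * 2 ^ ((w : ℝ) * p) := by
  intro v hvdef
  have hlogm : 0 < Real.log m := Real.log_pos (by linarith)
  have hε2' : (0:ℝ) < ε ^ 2 := by positivity
  have hζ0 : (0:ℝ) < ζ := by linarith
  have hv : 0 < v := by rw [hvdef]; positivity
  set T := Finset.univ.filter fun i : Fin n =>
        (k ≤ (i : ℕ) ∧ (i : ℕ) < n - k) ∧
          v / 2 ^ (w + 1) ≤ |(a i : ℝ)| ∧ |(a i : ℝ)| < v / 2 ^ w with hT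
  set C := Real.log m / ε ^ 2 with hC
  set s := ((levelSet x ε m ζ j).card : ℝ) with hs
  have hCpos : 0 < C := div_pos hlogm hε2'
  have hspos : 0 ≤ s := Nat.cast_nonneg _
  have hlow : (0:ℝ) < v / 2 ^ (w + 1) := by positivity
  -- Step 1: count times lower bound ≤ midSum
  have h1 : (T.card : ℝ) * (v / 2 ^ (w + 1)) ^ p ≤ midSum a p k := by
    calc (T.card : ℝ) * (v / 2 ^ (w + 1)) ^ p
        = ∑ _i ∈ T, (v / 2 ^ (w + 1)) ^ p := by rw [Finset.sum_const, nsmul_eq_mul]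
      _ ≤ ∑ i ∈ T, |(a i : ℝ)| ^ p := by
          refine Finset.sum_le_sum fun i hi => ?_
          simp only [hT, Finset.mem_filter] at hi
          exact Real.rpow_le_rpow hlow.le hi.2.2.1 hp1.le
      _ ≤ midSum a p k := by
          refine Finset.sum_le_sum_of_subset_of_nonneg ?_
            (fun i _ _ => Real.rpow_nonneg (abs_nonneg _) p)
          intro i hi
          simp only [hT, Finset.mem_filter] at hi ⊢
          exact ⟨hi.1, hi.2.1⟩
  have h2 : midSum a p k ≤ midSum a p k + k * aAbs a k ^ p := by
    have h0 : 0 ≤ (k:ℝ) * aAbs a k ^ p := by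
      refine mul_nonneg (Nat.cast_nonneg k) (Real.rpow_nonneg ?_ p)
      unfold aAbs; split
      · exact abs_nonneg _
      · exact le_refl 0
    linarith
  -- Step 2: level-set sum bounded by s * v ^ p
  have h3 : ∑ i ∈ levelSet x ε m ζ j, |(x i : ℝ)| ^ p ≤ s * v ^ p := by
    rw [hs, ← nsmul_eq_mul]
    refine Finset.sum_le_card_nsmul _ _ _ fun i hi => ?_
    simp only [levelSet, Finset.mem_filter] at hi
    exact Real.rpow_le_rpow (abs_nonneg _) (by rw [hvdef]; exact hi.2.2.le) hp1.le
  -- Step 3: use contribution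
  have h4 : midSum a p k + (k:ℝ) * aAbs a k ^ p ≤ C * (s * v ^ p) := by
    have hcon' := hcon
    unfold ContributesTrim at hcon'
    rw [div_mul_eq_mul_div, div_le_iff₀ hlogm] at hcon'
    rw [hC, div_mul_eq_mul_div, le_div_iff₀ hε2']
    nlinarith [h3, hlogm, hcon']
  have h5 : (T.card : ℝ) * (v / 2 ^ (w + 1)) ^ p ≤ C * (s * v ^ p) :=
    le_trans h1 (le_trans h2 h4)
  -- Rewrite (v / 2^(w+1))^p
  have hvp : (0:ℝ) < v ^ p := Real.rpow_pos_of_pos hv p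
  have hBpos : (0:ℝ) < ((2:ℝ) ^ (w + 1)) ^ p := Real.rpow_pos_of_pos (by positivity) p
  have hdiv : (v / 2 ^ (w + 1) : ℝ) ^ p = v ^ p / ((2:ℝ) ^ (w + 1)) ^ p :=
    Real.div_rpow hv.le (by positivity) p
  have h6 : (T.card : ℝ) ≤ C * s * ((2:ℝ) ^ (w + 1)) ^ p := by
    rw [hdiv] at h5
    rw [← mul_le_mul_iff_of_pos_right hvp]
    calc (T.card : ℝ) * v ^ p
        = ((T.card : ℝ) * (v ^ p / ((2:ℝ) ^ (w + 1)) ^ p)) * ((2:ℝ) ^ (w + 1)) ^ p := by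
          field_simp
      _ ≤ (C * (s * v ^ p)) * ((2:ℝ) ^ (w + 1)) ^ p :=
          mul_le_mul_of_nonneg_right h5 hBpos.le
      _ = C * s * ((2:ℝ) ^ (w + 1)) ^ p * v ^ p := by ring
  -- Bound ((2)^(w+1))^p = 2^(wp) * 2^p ≤ 2^(wp) * 4
  have hB : ((2:ℝ) ^ (w + 1)) ^ p = 2 ^ ((w : ℝ) * p) * 2 ^ p := by
    rw [← Real.rpow_natCast (2:ℝ) (w + 1), ← Real.rpow_mul (by norm_num)]
    rw [← Real.rpow_add (by norm_num)]
    push_cast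
    ring_nf
  have h2p : (2:ℝ) ^ p ≤ 4 := by
    calc (2:ℝ) ^ p ≤ (2:ℝ) ^ (2:ℝ) :=
          Real.rpow_le_rpow_of_exponent_le (by norm_num) hp2
      _ = 4 := by
          rw [show ((2:ℝ):ℝ) = ((2:ℕ):ℝ) by norm_num, Real.rpow_natCast]; norm_num
  have hwp : (0:ℝ) < (2:ℝ) ^ ((w : ℝ) * p) := Real.rpow_pos_of_pos (by norm_num) _
  rw [hB] at h6
  calc (T.card : ℝ) ≤ C * s * (2 ^ ((w : ℝ) * p) * 2 ^ p) := h6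
    _ ≤ C * s * (2 ^ ((w : ℝ) * p) * 4) := by
        refine mul_le_mul_of_nonneg_left ?_ (mul_nonneg hCpos.le hspos)
        exact mul_le_mul_of_nonneg_left h2p hwp.le
    _ = 4 * C * s * 2 ^ ((w : ℝ) * p) := by ring
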